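/- Let φ : M → N be a smooth map from a Hermitian manifold (M, g, J) to a Riemannian manifold N. Then φ is (1,1)-geodesic if and only if for every x ∈ M there exists an almost Hermitian structure J_x on T_{φ(x)}N such that (∇dφ)_x(Y^{10}, Z^{01}) ∈ T^{10}_{J_x}N for all Y^{10} ∈ T^{10}_x M, Z^{01} ∈ T^{01}_x M. -/

import Mathlib

open TensorProduct
open scoped RealInnerProductSpace

noncomputable def reT (V : Type*) [AddCommGroup V] [Module ℝ V] : ℂ ⊗[ℝ] V →ₗ[ℝ] V :=
  TensorProduct.lift ((LinearMap.lsmul ℝ V).comp Complex.reLm)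

noncomputable def imT (V : Type*) [AddCommGroup V] [Module ℝ V] : ℂ ⊗[ℝ] V →ₗ[ℝ] V :=
  TensorProduct.lift ((LinearMap.lsmul ℝ V).comp Complex.imLm)

@[simp] lemma reT_tmul (V : Type*) [AddCommGroup V] [Module ℝ V] (z : ℂ) (v : V) :
    reT V (z ⊗ₜ[ℝ] v) = z.re • v := rfl

@[simp] lemma imT_tmul (V : Type*) [AddCommGroup V] [Module ℝ V] (z : ℂ) (v : V) :
    imT V (z ⊗ₜ[ℝ] v) = z.im • v := rfl

lemma tensor_decomp (V : Type*) [AddCommGroup V] [Module ℝ V] (w : ℂ ⊗[ℝ] V) :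
    (1 : ℂ) ⊗ₜ[ℝ] (reT V w) + Complex.I ⊗ₜ[ℝ] (imT V w) = w := by
  induction w using TensorProduct.induction_on with
  | zero => simp
  | tmul z v =>
      simp only [reT_tmul, imT_tmul, tmul_smul]
      rw [smul_tmul', smul_tmul', ← add_tmul]
      congr 1
      simp only [Complex.real_smul]
      rw [mul_one]
      exact Complex.re_add_im z
  | add x y hx hy =>
      simp only [map_add, tmul_add]
      rw [add_add_add_comm, hx, hy]

lemma one_tmul_smul (V : Type*) [AddCommGroup V] [Module ℝ V] (z : ℂ) (v : V) :
    z • ((1 : ℂ) ⊗ₜ[ℝ] v) = z ⊗ₜ[ℝ] v := by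
  rw [smul_tmul', smul_eq_mul, mul_one]

lemma exists_hermitian (E' : Type*) [NormedAddCommGroup E'] [InnerProductSpace ℝ E']
    [FiniteDimensional ℝ E'] (n : ℕ) (hn : Module.finrank ℝ E' = 2 * n) :
    ∃ J' : E' →ₗ[ℝ] E', (∀ u, J' (J' u) = -u) ∧ ∀ u v : E', ⟪J' u, J' v⟫ = ⟪u, v⟫ := by
  classical
  set L : EuclideanSpace ℝ (Fin n × Fin 2) →ₗ[ℝ] EuclideanSpace ℝ (Fin n × Fin 2) :=
    { toFun := fun f => WithLp.toLp 2 (fun p : Fin n × Fin 2 => if p.2 = 0 then - f (p.1, 1) else f (p.1, 0))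
      map_add' := by
        intro f g; ext p
        by_cases h : p.2 = 0 <;> simp [h] <;> ring
      map_smul' := by
        intro r f; ext p
        by_cases h : p.2 = 0 <;> simp [h] } with hL
  have hL2 : ∀ f, L (L f) = -f := by
    intro f; ext p
    obtain ⟨i, j⟩ := p
    fin_cases j <;> simp [hL]
  have hLm : ∀ f g, ⟪L f, L g⟫ = ⟪f, g⟫ := by
    intro f g
    simp only [PiLp.inner_apply, RCLike.inner_apply, conj_trivial]
    rw [Fintype.sum_prod_type, Fintype.sum_prod_type]
    refine Finset.sum_congr rfl fun i _ => ?_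
    rw [Fin.sum_univ_two, Fin.sum_univ_two]
    simp [hL]
    ring
  have e : Fin n × Fin 2 ≃ Fin (2 * n) :=
    finProdFinEquiv.trans (finCongr (by ring))
  set b : OrthonormalBasis (Fin n × Fin 2) ℝ E' :=
    (stdOrthonormalBasis ℝ E').reindex ((finCongr hn).trans e.symm)
  refine ⟨b.repr.symm.toLinearEquiv.toLinearMap ∘ₗ L ∘ₗ b.repr.toLinearEquiv.toLinearMap,
    fun u => ?_, fun u v => ?_⟩
  · simp only [LinearMap.coe_comp, Function.comp_apply, LinearEquiv.coe_coe,
      LinearIsometryEquiv.coe_toLinearEquiv, LinearIsometryEquiv.apply_symm_apply]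
    rw [hL2, map_neg, LinearIsometryEquiv.symm_apply_apply]
  · simp only [LinearMap.coe_comp, Function.comp_apply, LinearEquiv.coe_coe,
      LinearIsometryEquiv.coe_toLinearEquiv]
    rw [LinearIsometryEquiv.inner_map_map, hLm, LinearIsometryEquiv.inner_map_map]

theorem one_one_geodesic_iff_exists_hermitian_structure
    (E E' : Type*) [NormedAddCommGroup E] [InnerProductSpace ℝ E]
    [NormedAddCommGroup E'] [InnerProductSpace ℝ E'] [FiniteDimensional ℝ E']
    (J : E →ₗ[ℝ] E) (hJ2 : ∀ u, J (J u) = -u)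
    (hJm : ∀ u v : E, ⟪J u, J v⟫ = ⟪u, v⟫)
    (n : ℕ) (hn : Module.finrank ℝ E' = 2 * n)
    (β : E →ₗ[ℝ] E →ₗ[ℝ] E') (hβsymm : ∀ u v, β u v = β v u)
    (βc : (ℂ ⊗[ℝ] E) →ₗ[ℂ] (ℂ ⊗[ℝ] E) →ₗ[ℂ] (ℂ ⊗[ℝ] E'))
    (hβc : ∀ u v : E, βc ((1 : ℂ) ⊗ₜ[ℝ] u) ((1 : ℂ) ⊗ₜ[ℝ] v) = (1 : ℂ) ⊗ₜ[ℝ] (β u v)) :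
    (∀ Y Z : ℂ ⊗[ℝ] E, (J.baseChange ℂ) Y = Complex.I • Y →
        (J.baseChange ℂ) Z = -Complex.I • Z → βc Y Z = 0) ↔
      (∃ J' : E' →ₗ[ℝ] E', (∀ u, J' (J' u) = -u) ∧
        (∀ u v : E', ⟪J' u, J' v⟫ = ⟪u, v⟫) ∧
        (∀ Y Z : ℂ ⊗[ℝ] E, (J.baseChange ℂ) Y = Complex.I • Y →
          (J.baseChange ℂ) Z = -Complex.I • Z →
          (J'.baseChange ℂ) (βc Y Z) = Complex.I • βc Y Z)) := by
  -- expansion of βc on sums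
  have hβ4 : ∀ a b c d : E,
      βc ((1:ℂ) ⊗ₜ[ℝ] a + Complex.I ⊗ₜ[ℝ] b) ((1:ℂ) ⊗ₜ[ℝ] c + Complex.I ⊗ₜ[ℝ] d) =
        (1:ℂ) ⊗ₜ[ℝ] (β a c - β b d) + Complex.I ⊗ₜ[ℝ] (β a d + β b c) := by
    intro a b c d
    have t2 : βc ((1:ℂ) ⊗ₜ[ℝ] a) (Complex.I ⊗ₜ[ℝ] d) = Complex.I ⊗ₜ[ℝ] (β a d) := by
      rw [← one_tmul_smul E Complex.I d, map_smul, hβc, one_tmul_smul]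
    have t3 : βc (Complex.I ⊗ₜ[ℝ] b) ((1:ℂ) ⊗ₜ[ℝ] c) = Complex.I ⊗ₜ[ℝ] (β b c) := by
      rw [← one_tmul_smul E Complex.I b, map_smul, LinearMap.smul_apply, hβc, one_tmul_smul]
    have t4 : βc (Complex.I ⊗ₜ[ℝ] b) (Complex.I ⊗ₜ[ℝ] d) = -((1:ℂ) ⊗ₜ[ℝ] (β b d)) := by
      rw [← one_tmul_smul E Complex.I b, map_smul, LinearMap.smul_apply,
        ← one_tmul_smul E Complex.I d, map_smul, hβc, smul_smul, Complex.I_mul_I,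
        neg_smul, one_smul]
    simp only [map_add, LinearMap.add_apply, hβc, t2, t3, t4]
    rw [tmul_sub, tmul_add]
    abel
  -- structure of eigenvectors
  have h10 : ∀ Y : ℂ ⊗[ℝ] E, (J.baseChange ℂ) Y = Complex.I • Y →
      ∃ a : E, Y = (1:ℂ) ⊗ₜ[ℝ] a + Complex.I ⊗ₜ[ℝ] (-(J a)) := by
    intro Y hY
    refine ⟨reT E Y, ?_⟩
    set a := reT E Y with ha
    set b := imT E Y with hb
    have hdec : (1:ℂ) ⊗ₜ[ℝ] a + Complex.I ⊗ₜ[ℝ] b = Y := tensor_decomp E Y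
    have e1 : (J.baseChange ℂ) Y = (1:ℂ) ⊗ₜ[ℝ] (J a) + Complex.I ⊗ₜ[ℝ] (J b) := by
      rw [← hdec]; simp
    have e2 : Complex.I • Y = Complex.I ⊗ₜ[ℝ] a - (1:ℂ) ⊗ₜ[ℝ] b := by
      rw [← hdec, smul_add, smul_tmul', smul_tmul', smul_eq_mul, smul_eq_mul, mul_one,
        Complex.I_mul_I, sub_eq_add_neg, ← neg_tmul]
    have e3 : (1:ℂ) ⊗ₜ[ℝ] (J a) + Complex.I ⊗ₜ[ℝ] (J b) =
        Complex.I ⊗ₜ[ℝ] a - (1:ℂ) ⊗ₜ[ℝ] b := by rw [← e1, ← e2]; exact hY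
    have hre := congrArg (reT E) e3
    simp only [map_add, map_sub, reT_tmul, Complex.one_re, Complex.I_re, one_smul,
      zero_smul, add_zero, zero_sub] at hre
    rw [← hdec]
    congr 1
    rw [show b = -(J a) from by rw [hre, neg_neg]]
  have h01 : ∀ Z : ℂ ⊗[ℝ] E, (J.baseChange ℂ) Z = -Complex.I • Z →
      ∃ c : E, Z = (1:ℂ) ⊗ₜ[ℝ] c + Complex.I ⊗ₜ[ℝ] (J c) := by
    intro Z hZ
    refine ⟨reT E Z, ?_⟩
    set c := reT E Z with hc
    set d := imT E Z with hd
    have hdec : (1:ℂ) ⊗ₜ[ℝ] c + Complex.I ⊗ₜ[ℝ] d = Z := tensor_decomp E Z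
    have e1 : (J.baseChange ℂ) Z = (1:ℂ) ⊗ₜ[ℝ] (J c) + Complex.I ⊗ₜ[ℝ] (J d) := by
      rw [← hdec]; simp
    have e2 : -Complex.I • Z = -(Complex.I ⊗ₜ[ℝ] c) + (1:ℂ) ⊗ₜ[ℝ] d := by
      rw [← hdec, smul_add, smul_tmul', smul_tmul', smul_eq_mul, smul_eq_mul, mul_one,
        neg_mul, Complex.I_mul_I, neg_neg, neg_tmul]
    have e3 : (1:ℂ) ⊗ₜ[ℝ] (J c) + Complex.I ⊗ₜ[ℝ] (J d) =
        -(Complex.I ⊗ₜ[ℝ] c) + (1:ℂ) ⊗ₜ[ℝ] d := by rw [← e1, ← e2]; exact hZ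
    have hre := congrArg (reT E) e3
    simp only [map_add, map_neg, reT_tmul, Complex.one_re, Complex.I_re, one_smul,
      zero_smul, add_zero, neg_zero, zero_add] at hre
    rw [← hdec]
    congr 1
    rw [hre]
  constructor
  · -- forward: take any hermitian structure
    intro h
    obtain ⟨J', hJ'2, hJ'm⟩ := exists_hermitian E' n hn
    refine ⟨J', hJ'2, hJ'm, fun Y Z hY hZ => ?_⟩
    rw [h Y Z hY hZ]
    simp
  · rintro ⟨J', hJ'2, hJ'm, hmem⟩ Y Z hY hZ
    -- Step A: diagonal vanishing
    have stepA : ∀ X : E, β X X + β (J X) (J X) = 0 := by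
      intro X
      have hYX : (J.baseChange ℂ) ((1:ℂ) ⊗ₜ[ℝ] X + Complex.I ⊗ₜ[ℝ] (-(J X))) =
          Complex.I • ((1:ℂ) ⊗ₜ[ℝ] X + Complex.I ⊗ₜ[ℝ] (-(J X))) := by
        rw [smul_add, smul_tmul', smul_tmul', smul_eq_mul, smul_eq_mul, mul_one,
          Complex.I_mul_I]
        simp [hJ2, tmul_neg, neg_tmul]
        abel
      have hZX : (J.baseChange ℂ) ((1:ℂ) ⊗ₜ[ℝ] X + Complex.I ⊗ₜ[ℝ] (J X)) =
          -Complex.I • ((1:ℂ) ⊗ₜ[ℝ] X + Complex.I ⊗ₜ[ℝ] (J X)) := by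
        rw [smul_add, smul_tmul', smul_tmul', smul_eq_mul, smul_eq_mul, mul_one,
          neg_mul, Complex.I_mul_I, neg_neg]
        simp [hJ2, tmul_neg, neg_tmul]
        abel
      have hm := hmem _ _ hYX hZX
      rw [hβ4] at hm
      have hβval : β X (J X) + β (-(J X)) X = 0 := by
        simp [hβsymm X (J X)]
      rw [hβval, tmul_zero, add_zero] at hm
      have hval : β X X - β (-(J X)) (J X) = β X X + β (J X) (J X) := by
        simp [sub_eq_add_neg]
      rw [hval] at hm
      set v := β X X + β (J X) (J X) with hv
      -- hm : J'.baseChange (1 ⊗ v) = I • (1 ⊗ v)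
      have hm2 : (1:ℂ) ⊗ₜ[ℝ] (J' v) = Complex.I ⊗ₜ[ℝ] v := by
        rw [← one_tmul_smul E' Complex.I v, ← hm, LinearMap.baseChange_tmul]
      have him := congrArg (imT E') hm2
      simp only [imT_tmul, Complex.one_im, Complex.I_im, zero_smul, one_smul] at him
      exact him.symm
    -- polarization
    have k1 : ∀ a c : E, β a c + β (J a) (J c) = 0 := by
      intro a c
      have hA := stepA (a + c)
      have ha := stepA a
      have hc := stepA c
      simp only [map_add, LinearMap.add_apply] at hA
      have key : (β a c + β (J a) (J c)) + (β a c + β (J a) (J c)) = 0 := by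
        have hsum : (β a c + β (J a) (J c)) + (β a c + β (J a) (J c)) =
            (β (a + c) (a + c) + β (J (a + c)) (J (a + c))) -
              (β a a + β (J a) (J a)) - (β c c + β (J c) (J c)) := by
          simp only [map_add, LinearMap.add_apply, hβsymm c a, hβsymm (J c) (J a)]
          abel
        rw [hsum]
        simp only [map_add, LinearMap.add_apply]
        rw [hA, ha, hc]
        simp
      have h2 : (2 : ℝ) • (β a c + β (J a) (J c)) = 0 := by
        rw [two_smul]; exact key
      have := smul_eq_zero.mp h2
      rcases this with h | h
      · norm_num at h
      · exact h
    have k2 : ∀ a c : E, β a (J c) = β (J a) c := by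
      intro a c
      have h1 := k1 a (J c)
      rw [hJ2] at h1
      have h3 : β (J a) (-c) = -(β (J a) c) := by simp
      rw [h3, ← sub_eq_add_neg, sub_eq_zero] at h1
      exact h1
    obtain ⟨a, rfl⟩ := h10 Y hY
    obtain ⟨c, rfl⟩ := h01 Z hZ
    rw [hβ4]
    have e1 : β a c - β (-(J a)) (J c) = 0 := by
      simpa [sub_eq_add_neg] using k1 a c
    have e2 : β a (J c) + β (-(J a)) c = 0 := by
      simp [k2 a c]
    rw [e1, e2, tmul_zero, tmul_zero, add_zero]
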